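/- Suppose the weighted α-fair allocation Λ satisfies Λ_i(n) = ρ_i for all i with n_i > 0 (condition (ii) of Theorem 4.1), where Aρ = C. Then there exists q ∈ ℝ_+^J such that n_i = ρ_i((qᵀA)_i/κ_i)^{1/α} for all i ∈ I. Conversely, if n admits such a representation with q ∈ ℝ_+^J and complementary slackness q_j(C_j - (AΛ(n))_j) = 0, then Λ_i(n) = ρ_i for all i with n_i > 0. -/

import Mathlib

open Real Filter Topology

private lemma bern14 {p : ℝ} (hp0 : p ≠ 0) (hp1 : p < 1) {s : ℝ} (hs : 0 < s) :
    (s ^ p - 1) / p ≤ s - 1 := by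
  have hlog : Real.log s ≤ s - 1 := Real.log_le_sub_one_of_pos hs
  rcases lt_or_gt_of_ne hp0 with h | h
  · rw [div_le_iff_of_neg h]
    have h1 : s ^ p = Real.exp (Real.log s * p) := Real.rpow_def_of_pos hs p
    have h2 : Real.log s * p + 1 ≤ Real.exp (Real.log s * p) := Real.add_one_le_exp _
    nlinarith
  · rw [div_le_iff₀ h]
    have h2 := rpow_one_add_le_one_add_mul_self (s := s - 1) (by linarith) h.le hp1.le
    have h3 : 1 + (s - 1) = s := by ring
    rw [h3] at h2
    linarith

private lemma tangent_pow14 {p : ℝ} (hp0 : p ≠ 0) (hp1 : p < 1) {y z : ℝ}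
    (hy : 0 < y) (hz : 0 < z) :
    (z ^ p - y ^ p) / p ≤ y ^ (p - 1) * (z - y) := by
  have hs : 0 < z / y := div_pos hz hy
  have hb := bern14 hp0 hp1 hs
  have hyp : (0:ℝ) < y ^ p := Real.rpow_pos_of_pos hy p
  have hzy : (z / y) ^ p = z ^ p / y ^ p := Real.div_rpow hz.le hy.le p
  rw [hzy] at hb
  have hyp1 : y ^ (p - 1) = y ^ p / y := by
    rw [Real.rpow_sub hy, Real.rpow_one]
  rw [hyp1]
  calc (z ^ p - y ^ p) / p = y ^ p * ((z ^ p / y ^ p - 1) / p) := by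
        field_simp
      _ ≤ y ^ p * (z / y - 1) := mul_le_mul_of_nonneg_left hb hyp.le
      _ = y ^ p / y * (z - y) := by field_simp

set_option maxHeartbeats 2000000 in
/-- Characterization of invariant states: if the weighted α-fair allocation `Λ` (the
unique maximizer of `G_n` subject to the capacity constraints, vanishing on empty
routes and positive on nonempty ones) satisfies `Λ_i(n) = ρ_i` for all `i` with
`n_i > 0`, where `Aρ = C`, then there is `q ∈ ℝ_+^J` with
`n_i = ρ_i ((qᵀA)_i/κ_i)^{1/α}` for all `i`; conversely, if `n` admits such a
representation with `q ≥ 0` and complementary slackness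
`q_j (C_j - (AΛ(n))_j) = 0`, then `Λ_i(n) = ρ_i` for all `i` with `n_i > 0`. -/
theorem stmt14 {I J : ℕ} (α : ℝ) (hα : 0 < α)
    (κ ρ : Fin I → ℝ) (hκ : ∀ i, 0 < κ i) (hρ : ∀ i, 0 < ρ i)
    (A : Matrix (Fin J) (Fin I) ℝ)
    (hA01 : ∀ j i, A j i = 0 ∨ A j i = 1) (hArank : A.rank = J)
    (C : Fin J → ℝ) (hC : ∀ j, 0 < C j)
    (hbal : ∀ j, ∑ i, A j i * ρ i = C j)
    (G : (Fin I → ℝ) → (Fin I → ℝ) → ℝ)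
    (hG : ∀ n x, G n x =
      if α = 1 then ∑ i, (if 0 < n i then κ i * n i * Real.log (x i) else 0)
      else ∑ i, (if 0 < n i then κ i * n i ^ α * x i ^ (1 - α) / (1 - α) else 0))
    (Λ : (Fin I → ℝ) → (Fin I → ℝ))
    (hΛ : ∀ n : Fin I → ℝ, (∀ i, 0 ≤ n i) →
      (∀ i, n i = 0 → Λ n i = 0) ∧ (∀ i, 0 < n i → 0 < Λ n i) ∧
      (∀ j, ∑ i, A j i * Λ n i ≤ C j) ∧
      (∀ x : Fin I → ℝ, (∀ i, 0 < n i → 0 < x i) → (∀ i, n i = 0 → x i = 0) →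
        (∀ j, ∑ i, A j i * x i ≤ C j) → x ≠ Λ n → G n x < G n (Λ n))) :
    (∀ n : Fin I → ℝ, (∀ i, 0 ≤ n i) →
        (∀ i, 0 < n i → Λ n i = ρ i) →
        ∃ q : Fin J → ℝ, (∀ j, 0 ≤ q j) ∧
          ∀ i, n i = ρ i * ((∑ j, q j * A j i) / κ i) ^ (1 / α)) ∧
    (∀ n : Fin I → ℝ, (∀ i, 0 ≤ n i) →
        ∀ q : Fin J → ℝ, (∀ j, 0 ≤ q j) →
        (∀ i, n i = ρ i * ((∑ j, q j * A j i) / κ i) ^ (1 / α)) →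
        (∀ j, q j * (C j - ∑ i, A j i * Λ n i) = 0) →
        ∀ i, 0 < n i → Λ n i = ρ i) := by
  classical
  constructor
  · -- Forward direction
    intro n hn hinv
    obtain ⟨h0, hpos, hfeas, hmax⟩ := hΛ n hn
    have hA0 : ∀ j i, 0 ≤ A j i := by
      intro j i; rcases hA01 j i with h | h <;> simp [h]
    have hnz : ∀ i, ¬ 0 < n i → n i = 0 := fun i hi => le_antisymm (not_lt.1 hi) (hn i)
    -- active rows vanish off the support
    have hactive : ∀ j, (∑ i, A j i * Λ n i = C j) → ∀ i, ¬ (0 < n i) → A j i = 0 := by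
      intro j hj i hi
      by_contra hA
      have hA1 : A j i = 1 := (hA01 j i).resolve_left hA
      have hterm : ∀ k ∈ Finset.univ, A j k * Λ n k ≤ A j k * ρ k := by
        intro k _
        by_cases hk : 0 < n k
        · rw [hinv k hk]
        · rw [h0 k (hnz k hk), mul_zero]
          exact mul_nonneg (hA0 j k) (hρ k).le
      have hstrict : A j i * Λ n i < A j i * ρ i := by
        rw [h0 i (hnz i hi), hA1, one_mul, one_mul]
        exact hρ i
      have hlt := Finset.sum_lt_sum hterm ⟨i, Finset.mem_univ i, hstrict⟩
      rw [hj, hbal j] at hlt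
      exact lt_irrefl _ hlt
    -- gradient vector
    obtain ⟨g, hgdef⟩ : ∃ g : Fin I → ℝ,
        ∀ i, g i = if 0 < n i then κ i * n i ^ α * ρ i ^ (-α) else 0 :=
      ⟨_, fun _ => rfl⟩
    -- multiplier cone
    set Q : Set (Fin J → ℝ) :=
      {q | (∀ j, 0 ≤ q j) ∧ ∀ j, ∑ i, A j i * Λ n i ≠ C j → q j = 0} with hQ
    set L := A.vecMulLinear with hL
    have hLapp : ∀ (q : Fin J → ℝ) (i), L q i = ∑ j, q j * A j i := by
      intro q i
      simp [hL, Matrix.vecMulLinear_apply, Matrix.vecMul, dotProduct]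
    by_cases hmem : g ∈ L '' Q
    · obtain ⟨q, ⟨hq0, hqz⟩, hLq⟩ := hmem
      refine ⟨q, hq0, fun i => ?_⟩
      have hqA : ∑ j, q j * A j i = g i := by rw [← hLapp, hLq]
      by_cases hi : 0 < n i
      · rw [hqA, hgdef i, if_pos hi]
        have hdiv : κ i * n i ^ α * ρ i ^ (-α) / κ i = (n i / ρ i) ^ α := by
          rw [Real.div_rpow (hn i) (hρ i).le, Real.rpow_neg (hρ i).le]
          field_simp [(hκ i).ne']
        rw [hdiv, one_div,
          Real.rpow_rpow_inv (div_nonneg (hn i) (hρ i).le) hα.ne',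
          mul_comm, div_mul_cancel₀ _ (hρ i).ne']
      · rw [hqA, hgdef i, if_neg hi, zero_div,
          Real.zero_rpow (one_div_ne_zero hα.ne'), mul_zero]
        exact hnz i hi
    · exfalso
      -- the cone is closed and convex
      have hQconv : Convex ℝ Q := by
        intro q1 hq1 q2 hq2 a b ha hb hab
        refine ⟨fun j => ?_, fun j hj => ?_⟩
        · have := add_nonneg (mul_nonneg ha (hq1.1 j)) (mul_nonneg hb (hq2.1 j))
          simpa using this
        · have h1 := hq1.2 j hj
          have h2 := hq2.2 j hj
          simp [h1, h2]
      have hQclosed : IsClosed Q := by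
        have hQeq : Q = ⋂ j, ({q : Fin J → ℝ | 0 ≤ q j} ∩
            {q : Fin J → ℝ | ∑ i, A j i * Λ n i ≠ C j → q j = 0}) := by
          ext q
          simp only [hQ, Set.mem_setOf_eq, Set.mem_iInter, Set.mem_inter_iff, forall_and]
        rw [hQeq]
        refine isClosed_iInter fun j => IsClosed.inter ?_ ?_
        · exact isClosed_le continuous_const (continuous_apply j)
        · by_cases hj : ∑ i, A j i * Λ n i ≠ C j
          · have he : {q : Fin J → ℝ | ∑ i, A j i * Λ n i ≠ C j → q j = 0}
                = {q : Fin J → ℝ | q j = 0} := by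
              ext q; simp [hj]
            rw [he]
            exact isClosed_eq (continuous_apply j) continuous_const
          · have he : {q : Fin J → ℝ | ∑ i, A j i * Λ n i ≠ C j → q j = 0}
                = Set.univ := by
              ext q; simp [hj]
            rw [he]
            exact isClosed_univ
      have hLker : LinearMap.ker L = ⊥ := by
        have hrk : A.transpose.rank = J := by rw [Matrix.rank_transpose]; exact hArank
        have h1 := LinearMap.finrank_range_add_finrank_ker (Matrix.mulVecLin A.transpose)
        have h2 : Module.finrank ℝ (Fin J → ℝ) = J := by
          simp [Module.finrank_fintype_fun_eq_card]
        rw [h2] at h1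
        have h3 : Module.finrank ℝ (LinearMap.range (Matrix.mulVecLin A.transpose)) = J := hrk
        have h4 : Module.finrank ℝ (LinearMap.ker (Matrix.mulVecLin A.transpose)) = 0 := by omega
        have h5 : LinearMap.ker (Matrix.mulVecLin A.transpose) = ⊥ :=
          Submodule.finrank_eq_zero.mp h4
        rw [hL, ← Matrix.mulVecLin_transpose]
        exact h5
      have hTconv : Convex ℝ (L '' Q) := hQconv.linear_image L
      have hTclosed : IsClosed (L '' Q) :=
        (LinearMap.isClosedEmbedding_of_injective hLker).isClosedMap _ hQclosed
      obtain ⟨f, u, hfu, hug⟩ := geometric_hahn_banach_closed_point hTconv hTclosed hmem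
      have h0T : (0 : Fin I → ℝ) ∈ L '' Q :=
        ⟨0, ⟨fun j => le_refl 0, fun j _ => rfl⟩, map_zero L⟩
      have hu0 : 0 < u := by simpa using hfu 0 h0T
      have hfT : ∀ v ∈ L '' Q, f v ≤ 0 := by
        intro v hv
        by_contra hfv
        push_neg at hfv
        obtain ⟨p, hp, rfl⟩ := hv
        have hc : (0:ℝ) < (u + 1) / f (L p) := div_pos (by linarith) hfv
        have hmem2 : L (((u + 1) / f (L p)) • p) ∈ L '' Q := by
          refine ⟨_, ⟨fun j => ?_, fun j hj => ?_⟩, rfl⟩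
          · simpa using mul_nonneg hc.le (hp.1 j)
          · simp [hp.2 j hj]
        have hlt := hfu _ hmem2
        rw [map_smul, map_smul, smul_eq_mul, div_mul_cancel₀ _ hfv.ne'] at hlt
        linarith
      obtain ⟨d, hddef⟩ : ∃ d : Fin I → ℝ,
          ∀ i, d i = f (fun j => if i = j then (1:ℝ) else 0) := ⟨_, fun _ => rfl⟩
      have hfrep : ∀ v : Fin I → ℝ, f v = ∑ i, v i * d i := by
        intro v
        conv_lhs => rw [pi_eq_sum_univ v]
        rw [map_sum]
        exact Finset.sum_congr rfl fun i _ => by rw [map_smul, smul_eq_mul, hddef]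
      obtain ⟨db, hdbdef⟩ : ∃ db : Fin I → ℝ,
          ∀ i, db i = if 0 < n i then d i else 0 := ⟨_, fun _ => rfl⟩
      have hgd : 0 < ∑ i, g i * db i := by
        have h1 : f g = ∑ i, g i * d i := hfrep g
        have h2 : ∑ i, g i * d i = ∑ i, g i * db i := by
          refine Finset.sum_congr rfl fun i _ => ?_
          by_cases hi : 0 < n i
          · rw [hdbdef, if_pos hi]
          · rw [hgdef, if_neg hi, zero_mul, zero_mul]
        rw [← h2, ← h1]
        linarith [hug, hu0]
      have hrowd : ∀ j, (∑ i, A j i * Λ n i = C j) → ∑ i, A j i * db i ≤ 0 := by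
        intro j hj
        have hrowmem : (fun i => A j i) ∈ L '' Q := by
          refine ⟨(fun j' => if j = j' then (1:ℝ) else 0), ⟨fun j' => ?_, fun j' hj' => ?_⟩, ?_⟩
          · by_cases h : j = j' <;> simp [h]
          · have : j ≠ j' := fun he => hj' (he ▸ hj)
            simp [this]
          · funext i
            rw [hLapp]
            simp
        have hf := hfT _ hrowmem
        rw [hfrep] at hf
        calc ∑ i, A j i * db i = ∑ i, A j i * d i := by
              refine Finset.sum_congr rfl fun i _ => ?_
              by_cases hi : 0 < n i
              · rw [hdbdef, if_pos hi]
              · rw [hactive j hj i hi, zero_mul, zero_mul]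
          _ ≤ 0 := hf
      -- perturbation
      have hE1 : ∀ᶠ t in nhdsWithin (0:ℝ) (Set.Ioi 0), ∀ i, 0 < n i → 0 < Λ n i + t * db i := by
        rw [Filter.eventually_all]
        intro i
        by_cases hi : 0 < n i
        · have hc : Continuous fun t : ℝ => Λ n i + t * db i :=
            continuous_const.add (continuous_id.mul continuous_const)
          have h00 : (0:ℝ) < Λ n i + 0 * db i := by simpa using hpos i hi
          have hev := (hc.tendsto 0).eventually (isOpen_Ioi.eventually_mem h00)
          exact eventually_nhdsWithin_of_eventually_nhds (hev.mono fun t ht _ => ht)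
        · filter_upwards with t hi'
          exact absurd hi' hi
      have hsumlin : ∀ j t, ∑ i, A j i * (Λ n i + t * db i)
          = (∑ i, A j i * Λ n i) + t * ∑ i, A j i * db i := by
        intro j t
        rw [Finset.mul_sum, ← Finset.sum_add_distrib]
        exact Finset.sum_congr rfl fun i _ => by ring
      have hE2 : ∀ᶠ t in nhdsWithin (0:ℝ) (Set.Ioi 0),
          ∀ j, ∑ i, A j i * (Λ n i + t * db i) ≤ C j := by
        rw [Filter.eventually_all]
        intro j
        by_cases hj : ∑ i, A j i * Λ n i = C j
        · filter_upwards [self_mem_nhdsWithin] with t ht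
          rw [hsumlin j t, hj]
          have h1 := hrowd j hj
          have ht0 : (0:ℝ) < t := ht
          nlinarith
        · have hjlt : ∑ i, A j i * Λ n i < C j := lt_of_le_of_ne (hfeas j) hj
          have hc : Continuous fun t : ℝ =>
              (∑ i, A j i * Λ n i) + t * ∑ i, A j i * db i :=
            continuous_const.add (continuous_id.mul continuous_const)
          have h00 : (∑ i, A j i * Λ n i) + (0:ℝ) * ∑ i, A j i * db i < C j := by
            simpa using hjlt
          have hev := (hc.tendsto 0).eventually (isOpen_Iio.eventually_mem h00)
          refine eventually_nhdsWithin_of_eventually_nhds (hev.mono fun t ht => ?_)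
          rw [hsumlin j t]
          exact le_of_lt ht
      -- derivative of the objective along the segment
      have hderiv : HasDerivAt (fun t => G n (fun i => Λ n i + t * db i))
          (∑ i, g i * db i) 0 := by
        have hlin : ∀ i, HasDerivAt (fun t : ℝ => Λ n i + t * db i) (db i) 0 :=
          fun i => (hasDerivAt_mul_const (db i)).const_add (Λ n i)
        by_cases hα1 : α = 1
        · have hGeq : (fun t => G n (fun i => Λ n i + t * db i))
              = fun t => ∑ i, (if 0 < n i then κ i * n i * Real.log (Λ n i + t * db i) else 0) := by
            funext t
            rw [hG, if_pos hα1]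
          rw [hGeq]
          refine HasDerivAt.fun_sum fun i _ => ?_
          by_cases hi : 0 < n i
          · simp only [if_pos hi]
            have hval : Λ n i + (0:ℝ) * db i ≠ 0 := by simpa using (hpos i hi).ne'
            have hlog := (hlin i).log hval
            have := hlog.const_mul (κ i * n i)
            refine this.congr_deriv ?_
            symm
            rw [hgdef, if_pos hi, hα1, Real.rpow_one, Real.rpow_neg_one, hinv i hi]
            field_simp
            rw [mul_zero, add_zero]
          · simp only [if_neg hi]
            have hg0 : g i * db i = 0 := by rw [hgdef, if_neg hi, zero_mul]
            rw [hg0]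
            exact hasDerivAt_const 0 0
        · have hGeq : (fun t => G n (fun i => Λ n i + t * db i))
              = fun t => ∑ i, (if 0 < n i then
                  κ i * n i ^ α * (Λ n i + t * db i) ^ (1 - α) / (1 - α) else 0) := by
            funext t
            rw [hG, if_neg hα1]
          rw [hGeq]
          refine HasDerivAt.fun_sum fun i _ => ?_
          by_cases hi : 0 < n i
          · simp only [if_pos hi]
            have hval : Λ n i + (0:ℝ) * db i ≠ 0 := by simpa using (hpos i hi).ne'
            have hpow := (hlin i).rpow_const (p := 1 - α) (Or.inl hval)
            have := (hpow.const_mul (κ i * n i ^ α)).div_const (1 - α)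
            refine this.congr_deriv ?_
            symm
            have h1α : (1:ℝ) - α ≠ 0 := sub_ne_zero_of_ne (Ne.symm hα1)
            have hzero : Λ n i + (0:ℝ) * db i = ρ i := by
              rw [zero_mul, add_zero, hinv i hi]
            rw [hgdef, if_pos hi, hzero]
            have hexp : (1:ℝ) - α - 1 = -α := by ring
            rw [hexp]
            field_simp
          · simp only [if_neg hi]
            have hg0 : g i * db i = 0 := by rw [hgdef, if_neg hi, zero_mul]
            rw [hg0]
            exact hasDerivAt_const 0 0
      have hslope := hasDerivAt_iff_tendsto_slope.mp hderiv
      have hmono : nhdsWithin (0:ℝ) (Set.Ioi 0) ≤ nhdsWithin (0:ℝ) {(0:ℝ)}ᶜ :=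
        nhdsWithin_mono 0 (fun t ht => ne_of_gt ht)
      have hslope' := hslope.mono_left hmono
      have hE3 : ∀ᶠ t in nhdsWithin (0:ℝ) (Set.Ioi 0),
          G n (Λ n) < G n (fun i => Λ n i + t * db i) := by
        have hev := hslope'.eventually (isOpen_Ioi.eventually_mem hgd)
        filter_upwards [hev, self_mem_nhdsWithin] with t hslt ht
        have ht0 : (0:ℝ) < t := ht
        have hs : slope (fun t => G n (fun i => Λ n i + t * db i)) 0 t
            = (G n (fun i => Λ n i + t * db i) - G n (fun i => Λ n i + 0 * db i)) / t := by
          rw [slope_def_field]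
          rw [div_eq_div_iff (by linarith) (by linarith)]
          ring
        rw [hs] at hslt
        have hG0 : G n (fun i => Λ n i + 0 * db i) = G n (Λ n) := by
          congr 1
          funext i
          rw [zero_mul, add_zero]
        rw [hG0] at hslt
        have := (div_pos_iff.mp (Set.mem_Ioi.mp hslt))
        rcases this with ⟨h1, _⟩ | ⟨_, h2⟩
        · linarith
        · linarith
      obtain ⟨t, hE1t, hE2t, hE3t⟩ := (hE1.and (hE2.and hE3)).exists
      have hxz : ∀ i, n i = 0 → Λ n i + t * db i = 0 := by
        intro i hi
        have hni : ¬ 0 < n i := by rw [hi]; exact lt_irrefl 0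
        rw [h0 i hi, hdbdef, if_neg hni, mul_zero, add_zero]
      have hne : (fun i => Λ n i + t * db i) ≠ Λ n := by
        intro he
        rw [he] at hE3t
        exact lt_irrefl _ hE3t
      have hlt := hmax _ hE1t hxz hE2t hne
      exact absurd hE3t (not_lt.2 (le_of_lt hlt))
  · -- Reverse direction
    intro n hn q hq hrep hslack
    obtain ⟨h0, hpos, hfeas, hmax⟩ := hΛ n hn
    obtain ⟨w, hwdef⟩ : ∃ w : Fin I → ℝ, ∀ i, w i = ∑ j, q j * A j i :=
      ⟨_, fun _ => rfl⟩
    have hA0 : ∀ j i, 0 ≤ A j i := by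
      intro j i; rcases hA01 j i with h | h <;> simp [h]
    have hw0 : ∀ i, 0 ≤ w i := fun i => by
      rw [hwdef]
      exact Finset.sum_nonneg fun j _ => mul_nonneg (hq j) (hA0 j i)
    have hrep' : ∀ i, n i = ρ i * (w i / κ i) ^ ((1:ℝ)/α) := by
      intro i; rw [hwdef]; exact hrep i
    have hwzero : ∀ i, ¬ 0 < n i → w i = 0 := by
      intro i hi
      have hni : n i = 0 := le_antisymm (not_lt.1 hi) (hn i)
      have h1 := hrep' i
      rw [hni] at h1
      have h2 : (w i / κ i) ^ ((1:ℝ)/α) = 0 := by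
        rcases mul_eq_zero.mp h1.symm with h | h
        · exact absurd h (hρ i).ne'
        · exact h
      have h3 : w i / κ i = 0 :=
        ((Real.rpow_eq_zero_iff_of_nonneg
          (div_nonneg (hw0 i) (hκ i).le)).mp h2).1
      rcases div_eq_zero_iff.mp h3 with h | h
      · exact h
      · exact absurd h (hκ i).ne'
    have hwpos : ∀ i, 0 < n i → w i = κ i * n i ^ α * ρ i ^ (-α) := by
      intro i hi
      have h1 := hrep' i
      have h2 : (w i / κ i) ^ ((1:ℝ)/α) = n i / ρ i := by
        rw [eq_div_iff (hρ i).ne', h1]; ring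
      have h3 : w i / κ i = (n i / ρ i) ^ α := by
        rw [← h2, one_div, Real.rpow_inv_rpow (div_nonneg (hw0 i) (hκ i).le) hα.ne']
      have h4 : (n i / ρ i) ^ α = n i ^ α * ρ i ^ (-α) := by
        rw [Real.div_rpow hi.le (hρ i).le, Real.rpow_neg (hρ i).le, div_eq_mul_inv]
      have h5 : w i = κ i * (w i / κ i) := by
        rw [eq_comm, mul_comm, div_mul_cancel₀ _ (hκ i).ne']
      rw [h5, h3, h4]; ring
    obtain ⟨x, hxdef⟩ : ∃ x : Fin I → ℝ, ∀ i, x i = if 0 < n i then ρ i else 0 :=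
      ⟨_, fun _ => rfl⟩
    have hxfeas : ∀ j, ∑ i, A j i * x i ≤ C j := by
      intro j
      rw [← hbal j]
      refine Finset.sum_le_sum fun i _ => ?_
      rw [hxdef]
      by_cases hi : 0 < n i
      · rw [if_pos hi]
      · rw [if_neg hi, mul_zero]
        exact mul_nonneg (hA0 j i) (hρ i).le
    have hswap : ∀ v : Fin I → ℝ, ∑ i, w i * v i = ∑ j, q j * ∑ i, A j i * v i := by
      intro v
      calc ∑ i, w i * v i = ∑ i, ∑ j, q j * (A j i * v i) := by
            refine Finset.sum_congr rfl fun i _ => ?_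
            rw [hwdef, Finset.sum_mul]
            exact Finset.sum_congr rfl fun j _ => by ring
        _ = ∑ j, ∑ i, q j * (A j i * v i) := Finset.sum_comm
        _ = ∑ j, q j * ∑ i, A j i * v i := by
            refine Finset.sum_congr rfl fun j _ => ?_
            rw [Finset.mul_sum]
    have hsum1 : ∑ i, w i * Λ n i = ∑ j, q j * C j := by
      rw [hswap]
      refine Finset.sum_congr rfl fun j _ => ?_
      have h := hslack j
      rw [mul_sub, sub_eq_zero] at h
      exact h.symm
    have hsum2 : ∑ i, w i * ρ i = ∑ j, q j * C j := by
      rw [hswap]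
      exact Finset.sum_congr rfl fun j _ => by rw [hbal]
    have hsums : ∑ i, (w i * Λ n i - w i * ρ i) = 0 := by
      rw [Finset.sum_sub_distrib, hsum1, hsum2, sub_self]
    -- key inequality
    have hkey : G n (Λ n) ≤ G n x := by
      have hterm : ∀ i, (if α = 1 then (if 0 < n i then κ i * n i * Real.log (Λ n i) else 0)
            else (if 0 < n i then κ i * n i ^ α * Λ n i ^ (1 - α) / (1 - α) else 0))
          ≤ (if α = 1 then (if 0 < n i then κ i * n i * Real.log (x i) else 0)
            else (if 0 < n i then κ i * n i ^ α * x i ^ (1 - α) / (1 - α) else 0))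
            + (w i * Λ n i - w i * ρ i) := by
        intro i
        by_cases hi : 0 < n i
        · have hxρ : x i = ρ i := by rw [hxdef, if_pos hi]
          have hΛpos := hpos i hi
          have hwv := hwpos i hi
          by_cases hα1 : α = 1
          · simp only [if_pos hα1, if_pos hi, hxρ]
            have htan : Real.log (Λ n i) - Real.log (ρ i) ≤ (Λ n i - ρ i) / ρ i := by
              rw [← Real.log_div hΛpos.ne' (hρ i).ne']
              have := Real.log_le_sub_one_of_pos (div_pos hΛpos (hρ i))
              calc Real.log (Λ n i / ρ i) ≤ Λ n i / ρ i - 1 := this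
                _ = (Λ n i - ρ i) / ρ i := by
                    rw [sub_div, div_self (hρ i).ne']
            have hcoef : 0 < κ i * n i := mul_pos (hκ i) hi
            have h6 := mul_le_mul_of_nonneg_left htan hcoef.le
            have h7 : w i * Λ n i - w i * ρ i = κ i * n i * ((Λ n i - ρ i) / ρ i) := by
              rw [hwv, hα1, Real.rpow_one, Real.rpow_neg_one]
              field_simp
            rw [h7]
            nlinarith [h6]
          · simp only [if_neg hα1, if_pos hi, hxρ]
            have hp0 : (1:ℝ) - α ≠ 0 := sub_ne_zero_of_ne (Ne.symm hα1)
            have hp1 : (1:ℝ) - α < 1 := by linarith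
            have htan := tangent_pow14 hp0 hp1 (hρ i) hΛpos
            have hexp : (1:ℝ) - α - 1 = -α := by ring
            rw [hexp] at htan
            have hcoef : (0:ℝ) < κ i * n i ^ α :=
              mul_pos (hκ i) (Real.rpow_pos_of_pos hi α)
            have h6 := mul_le_mul_of_nonneg_left htan hcoef.le
            have h7 : w i * Λ n i - w i * ρ i
                = κ i * n i ^ α * (ρ i ^ (-α) * (Λ n i - ρ i)) := by
              rw [hwv]; ring
            have h9 : κ i * n i ^ α * Λ n i ^ (1 - α) / (1 - α)
                - κ i * n i ^ α * ρ i ^ (1 - α) / (1 - α)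
                  = κ i * n i ^ α * ((Λ n i ^ (1-α) - ρ i ^ (1-α)) / (1 - α)) := by
              field_simp
            rw [h7]
            linarith [h6, h9]
        · have hwz := hwzero i hi
          simp only [if_neg hi, hwz, zero_mul, sub_zero, add_zero]
          by_cases hα1 : α = 1 <;> simp [hα1]
      have h8 : G n (Λ n) ≤ G n x + ∑ i, (w i * Λ n i - w i * ρ i) := by
        rw [hG, hG]
        by_cases hα1 : α = 1
        · simp only [if_pos hα1]
          rw [← Finset.sum_add_distrib]
          refine Finset.sum_le_sum fun i _ => ?_
          have := hterm i
          simpa only [if_pos hα1] using this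
        · simp only [if_neg hα1]
          rw [← Finset.sum_add_distrib]
          refine Finset.sum_le_sum fun i _ => ?_
          have := hterm i
          simpa only [if_neg hα1] using this
      rw [hsums, add_zero] at h8
      exact h8
    have hxeq : x = Λ n := by
      by_contra hne
      have hlt := hmax x
        (fun i hi => by rw [hxdef, if_pos hi]; exact hρ i)
        (fun i hi => by
          rw [hxdef, if_neg (by rw [hi]; exact lt_irrefl 0)])
        hxfeas hne
      exact absurd hkey (not_le.2 hlt)
    intro i hi
    rw [← hxeq, hxdef, if_pos hi]
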